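/- Let 1 ≤ k ≤ n and let π be a partition of an n-element set into nonempty parts whose sizes pairwise differ by at most one. If the total number of unordered pairs of distinct elements lying in a common part of π equals β_{n,k}, then π has exactly k parts. -/

import Mathlib

/-- `beta n k = r·F_U(F_U−1)/2 + (k−r)·F_L(F_L−1)/2` where `F_L = ⌊n/k⌋`,
`F_U = ⌈n/k⌉ = (n+k-1)/k` and `r = n mod k`: the number of edges of a balanced
partition of an `n`-element set into `k` parts. -/
def beta (n k : ℕ) : ℕ :=
  (n % k) * ((n + k - 1) / k * ((n + k - 1) / k - 1) / 2)
    + (k - n % k) * (n / k * (n / k - 1) / 2)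


lemma choose_two_succ (a : ℕ) : (a + 1).choose 2 = a + a.choose 2 := by
  rw [Nat.choose_succ_succ, Nat.choose_one_right]

lemma beta_closed (n k : ℕ) (hk : 1 ≤ k) :
    beta n k = k * (n / k).choose 2 + (n / k) * (n % k) := by
  unfold beta
  rw [← Nat.choose_two_right, ← Nat.choose_two_right]
  have hr : n % k < k := Nat.mod_lt _ hk
  rcases Nat.eq_zero_or_pos (n % k) with h0 | hpos
  · rw [h0]; simp
  · have hceil : (n + k - 1) / k = n / k + 1 := by
      have hn : k * (n / k) + n % k = n := Nat.div_add_mod n k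
      have h1 : n + k - 1 = k * (n / k) + (n % k + k - 1) := by omega
      rw [h1, Nat.mul_add_div hk]
      have h2 : (n % k + k - 1) / k = 1 :=
        Nat.div_eq_of_lt_le (by omega) (by omega)
      omega
    rw [hceil, choose_two_succ]
    set r := n % k with hr0
    set L := n / k with hL0
    set C := L.choose 2 with hC0
    obtain ⟨d, hd⟩ := Nat.exists_eq_add_of_le hr.le
    rw [hd, Nat.add_sub_cancel_left]
    ring

lemma sum_div_closed (n k : ℕ) (hk : 1 ≤ k) :
    ∑ i ∈ Finset.range n, i / k = k * (n / k).choose 2 + (n / k) * (n % k) := by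
  induction n with
  | zero => simp
  | succ n ih =>
    rw [Finset.sum_range_succ, ih]
    have hn : k * (n / k) + n % k = n := Nat.div_add_mod n k
    have hr : n % k < k := Nat.mod_lt _ hk
    rcases eq_or_lt_of_le (Nat.succ_le_of_lt hr) with heq | hlt
    · -- n % k + 1 = k
      have h1 : n + 1 = k * (n / k + 1) := by rw [Nat.mul_succ]; omega
      have hdiv : (n + 1) / k = n / k + 1 := by
        rw [h1, Nat.mul_div_cancel_left _ hk]
      have hmod : (n + 1) % k = 0 := by
        rw [h1, Nat.mul_mod_right]
      rw [hdiv, hmod, choose_two_succ]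
      set L := n / k
      have : n % k = k - 1 := by omega
      rw [this]
      obtain ⟨d, hd⟩ := Nat.exists_eq_add_of_le hk
      rw [hd]
      simp [Nat.add_sub_cancel_left]
      ring
    · have h1 : n + 1 = k * (n / k) + (n % k + 1) := by omega
      have hdiv : (n + 1) / k = n / k := by
        rw [h1, Nat.mul_add_div hk, Nat.div_eq_of_lt hlt, Nat.add_zero]
      have hmod : (n + 1) % k = n % k + 1 := by
        rw [h1, Nat.mul_add_mod, Nat.mod_eq_of_lt hlt]
      rw [hdiv, hmod]
      ring

lemma beta_lt (n k k' : ℕ) (hk : 1 ≤ k) (hkk' : k < k') (hk'n : k' ≤ n) :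
    beta n k' < beta n k := by
  rw [beta_closed n k hk, beta_closed n k' (by omega),
    ← sum_div_closed n k hk, ← sum_div_closed n k' (by omega)]
  apply Finset.sum_lt_sum
  · intro i _
    exact Nat.div_le_div_left hkk'.le hk
  · refine ⟨k, Finset.mem_range.mpr (by omega), ?_⟩
    rw [Nat.div_eq_of_lt hkk', Nat.div_self hk]
    omega

/-- let `1 ≤ k ≤ n` and let `π` be a partition of an `n`-element set
into `m` nonempty parts whose sizes pairwise differ by at most one. If the number of
unordered pairs of distinct elements lying in a common part of `π` equals `β_{n,k}`,
then `π` has exactly `k` parts, i.e. `m = k`. -/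
theorem stmt_13 {α : Type*} [DecidableEq α] (V : Finset α) (n k m : ℕ)
    (hn : V.card = n) (hk : 1 ≤ k) (hkn : k ≤ n)
    (P : Fin m → Finset α)
    (hne : ∀ c, (P c).Nonempty)
    (hdisj : ∀ c c', c ≠ c' → Disjoint (P c) (P c'))
    (hcover : Finset.univ.biUnion P = V)
    (hbal : ∀ c c', (P c).card ≤ (P c').card + 1)
    (hbeta : ∑ c : Fin m, (P c).card.choose 2 = beta n k) :
    m = k := by
  -- total size
  have hsum : ∑ c : Fin m, (P c).card = n := by
    rw [← hn, ← hcover, Finset.card_biUnion]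
    intro c _ c' _ h
    exact hdisj c c' h
  have hm1 : 1 ≤ m := by
    by_contra h
    have hm0 : m = 0 := by omega
    subst hm0
    simp at hsum
    omega
  have hmn : m ≤ n := by
    calc m = ∑ _c : Fin m, 1 := by simp
    _ ≤ ∑ c : Fin m, (P c).card :=
        Finset.sum_le_sum fun i _ => Finset.card_pos.mpr (hne i)
    _ = n := hsum
  -- minimal part
  haveI : Nonempty (Fin m) := Fin.pos_iff_nonempty.mp hm1
  obtain ⟨i0, -, hmin⟩ := Finset.exists_min_image Finset.univ
    (fun i => (P i).card) Finset.univ_nonempty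
  set a := (P i0).card with ha
  have hle : ∀ i, a ≤ (P i).card := fun i => hmin i (Finset.mem_univ i)
  have hub : ∀ i, (P i).card ≤ a + 1 := fun i => hbal i i0
  -- the sum of residues
  have hres : ∑ i : Fin m, ((P i).card - a) + m * a = n := by
    rw [← hsum]
    have h1 : ∑ i : Fin m, ((P i).card - a) + m * a
        = ∑ i : Fin m, (((P i).card - a) + a) := by
      rw [Finset.sum_add_distrib, Finset.sum_const, Finset.card_univ,
        Fintype.card_fin, smul_eq_mul]
    rw [h1]
    exact Finset.sum_congr rfl fun i _ => Nat.sub_add_cancel (hle i)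
  set t := ∑ i : Fin m, ((P i).card - a) with htdef
  have htm : t < m := by
    have : t < ∑ _i : Fin m, 1 := by
      apply Finset.sum_lt_sum
      · intro i _; have := hub i; have := hle i; omega
      · exact ⟨i0, Finset.mem_univ i0, by omega⟩
    simpa using this
  -- division facts
  have hdm : n / m = a := by
    have : n = m * a + t := by omega
    rw [this, Nat.mul_add_div hm1, Nat.div_eq_of_lt htm]; omega
  have hmm : n % m = t := by
    have : n = m * a + t := by omega
    rw [this, Nat.mul_add_mod, Nat.mod_eq_of_lt htm]
  -- compute the edge sum
  have hedge : ∑ c : Fin m, (P c).card.choose 2 = beta n m := by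
    have hpt : ∀ i : Fin m, (P i).card.choose 2
        = a.choose 2 + ((P i).card - a) * a := by
      intro i
      have h2 : (P i).card = a ∨ (P i).card = a + 1 := by
        have := hub i; have := hle i; omega
      rcases h2 with h2 | h2 <;> rw [h2]
      · simp
      · rw [choose_two_succ, Nat.add_sub_cancel_left, one_mul]
        omega
    rw [Finset.sum_congr rfl fun i _ => hpt i, Finset.sum_add_distrib,
      Finset.sum_const, Finset.card_univ, Fintype.card_fin, smul_eq_mul,
      ← Finset.sum_mul, ← htdef, beta_closed n m hm1, hdm, hmm]
    ring
  rw [hedge] at hbeta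
  rcases lt_trichotomy m k with h | h | h
  · exact absurd (beta_lt n m k hm1 h hkn) (by omega)
  · exact h
  · exact absurd (beta_lt n k m hk h hmn) (by omega)
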